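/- Let M₁ be a randomized mechanism from datasets to probability distributions over outcomes Ω₁ satisfying (ε₁, δ₁)-DP with respect to an adjacency relation on datasets, and let M₂ : Ω₁ → (datasets → PMF Ω₂) be a family of mechanisms such that for every fixed ω₁ ∈ Ω₁, the mechanism D ↦ M₂(ω₁)(D) satisfies (ε₂, δ₂)-DP with respect to the same adjacency relation. Then the adaptively composed mechanism that on dataset D samples ω₁ ~ M₁(D), then samples ω₂ ~ M₂(ω₁)(D), and returns (ω₁, ω₂), satisfies (ε₁ + ε₂, δ₁ + δ₂)-DP with respect to that adjacency relation. -/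

import Mathlib

/-- A randomized mechanism `M` from datasets to probability mass functions over an
outcome type `Ω` satisfies `(ε, δ)`-differential privacy with respect to an adjacency
relation `adj` on datasets if for all pairs of adjacent datasets `D, D'` and all
events `E ⊆ Ω`, `Pr[M(D) ∈ E] ≤ e^ε · Pr[M(D') ∈ E] + δ`. -/
def IsDP {Dset Ω : Type*} (adj : Dset → Dset → Prop) (M : Dset → PMF Ω)
    (ε δ : ℝ) : Prop :=
  ∀ ⦃D D' : Dset⦄, adj D D' → ∀ E : Set Ω,
    (M D).toOuterMeasure E ≤
      ENNReal.ofReal (Real.exp ε) * (M D').toOuterMeasure E + ENNReal.ofReal δ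

open MeasureTheory Set
open scoped ENNReal

lemma pmf_lintegral_eq_tsum {Ω : Type*} [MeasurableSpace Ω] [MeasurableSingletonClass Ω]
    (p : PMF Ω) (g : Ω → ℝ≥0∞) :
    ∫⁻ a, g a ∂p.toMeasure = ∑' a, p a * g a := by
  rw [← p.restrict_toMeasure_support, lintegral_countable _ p.support_countable]
  rw [← tsum_subtype_eq_of_support_subset (s := p.support)
    (f := fun a => p a * g a) ?_]
  · refine tsum_congr fun a => ?_
    rw [p.toMeasure_apply_singleton _ (measurableSet_singleton _), mul_comm]
  · intro a ha
    by_contra h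
    simp only [PMF.mem_support_iff, not_not] at h
    simp [h] at ha

lemma key_lemma {Ω : Type*} (p p' : PMF Ω) (c d : ℝ≥0∞) (hc : c ≠ ⊤)
    (h : ∀ S : Set Ω, p.toOuterMeasure S ≤ c * p'.toOuterMeasure S + d)
    (g : Ω → ℝ≥0∞) (hg : ∀ a, g a ≤ 1) :
    ∑' a, p a * g a ≤ c * ∑' a, p' a * g a + d := by
  letI : MeasurableSpace Ω := ⊤
  haveI : MeasurableSingletonClass Ω := ⟨fun _ => trivial⟩
  have hmeas : ∀ (q : PMF Ω) (S : Set Ω), q.toMeasure S = q.toOuterMeasure S :=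
    fun q S => q.toMeasure_apply_eq_toOuterMeasure_apply (s := S) trivial
  rw [← pmf_lintegral_eq_tsum, ← pmf_lintegral_eq_tsum]
  set f : Ω → ℝ := fun a => (g a).toReal with hf
  have hfg : ∀ a, ENNReal.ofReal (f a) = g a := fun a =>
    ENNReal.ofReal_toReal (lt_of_le_of_lt (hg a) ENNReal.one_lt_top).ne
  have hf1 : ∀ a, f a ≤ 1 := fun a => by
    simpa using ENNReal.toReal_mono ENNReal.one_ne_top (hg a)
  have hfm : Measurable f := fun _ _ => trivial
  have cake : ∀ q : PMF Ω,
      ∫⁻ a, g a ∂q.toMeasure = ∫⁻ t in Ioi (0:ℝ), q.toMeasure {a | t < f a} := by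
    intro q
    rw [← lintegral_eq_lintegral_meas_lt q.toMeasure
      (Filter.Eventually.of_forall fun a => ENNReal.toReal_nonneg)
      (hfm.aemeasurable)]
    exact lintegral_congr fun a => (hfg a).symm
  rw [cake p, cake p']
  have hsplit : (Ioi (0:ℝ)) = Ioo (0:ℝ) 1 ∪ Ici 1 :=
    (Set.Ioo_union_Ici_eq_Ioi one_pos).symm
  have hdisj : Disjoint (Ioo (0:ℝ) 1) (Ici 1) := by
    rw [Set.disjoint_left]; intro t ht ht'; exact absurd ht.2 (not_lt.mpr ht')
  calc (∫⁻ t in Ioi (0:ℝ), p.toMeasure {a | t < f a})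
      = (∫⁻ t in Ioo (0:ℝ) 1, p.toMeasure {a | t < f a})
        + (∫⁻ t in Ici (1:ℝ), p.toMeasure {a | t < f a}) := by
        rw [hsplit, lintegral_union measurableSet_Ici hdisj]
    _ = (∫⁻ t in Ioo (0:ℝ) 1, p.toMeasure {a | t < f a}) := by
        have h0 : (∫⁻ t in Ici (1:ℝ), p.toMeasure {a | t < f a}) = 0 := by
          rw [setLIntegral_congr_fun measurableSet_Ici
            (fun t ht => ?_), lintegral_zero]
          have he : {a | t < f a} = (∅ : Set Ω) := by
            ext a; simp only [mem_setOf_eq, mem_empty_iff_false, iff_false, not_lt]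
            exact (hf1 a).trans ht
          simp [he]
        rw [h0, add_zero]
    _ ≤ ∫⁻ t in Ioo (0:ℝ) 1, (c * p'.toMeasure {a | t < f a} + d) := by
        refine lintegral_mono fun t => ?_
        rw [hmeas, hmeas]; exact h _
    _ = c * (∫⁻ t in Ioo (0:ℝ) 1, p'.toMeasure {a | t < f a})
        + d * (volume (Ioo (0:ℝ) 1)) := by
        rw [lintegral_add_right _ measurable_const, lintegral_const_mul' _ _ hc,
          setLIntegral_const]
    _ ≤ c * (∫⁻ t in Ioi (0:ℝ), p'.toMeasure {a | t < f a}) + d := by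
        refine add_le_add (mul_le_mul_right (lintegral_mono_set Ioo_subset_Ioi_self) c) ?_
        simp [Real.volume_Ioo]

lemma pmf_toOuterMeasure_le_one {Ω : Type*} (p : PMF Ω) (s : Set Ω) :
    p.toOuterMeasure s ≤ 1 := by
  rw [PMF.toOuterMeasure_apply]
  refine le_trans (ENNReal.summable.tsum_le_tsum (fun a => Set.indicator_le_self s p a)
    ENNReal.summable) ?_
  rw [p.tsum_coe]

/-- Adaptive composition: if `M₁` is `(ε₁, δ₁)`-DP and, for every fixed first-phase
outcome `ω₁`, the mechanism `D ↦ M₂ ω₁ D` is `(ε₂, δ₂)`-DP, then the adaptively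
composed mechanism that samples `ω₁ ~ M₁(D)`, then `ω₂ ~ M₂(ω₁)(D)`, and returns
`(ω₁, ω₂)` is `(ε₁ + ε₂, δ₁ + δ₂)`-DP. -/
theorem adaptive_composition {Dset Ω₁ Ω₂ : Type*} (adj : Dset → Dset → Prop)
    (M₁ : Dset → PMF Ω₁) (M₂ : Ω₁ → Dset → PMF Ω₂)
    (ε₁ ε₂ δ₁ δ₂ : ℝ) (hε₁ : 0 ≤ ε₁) (hε₂ : 0 ≤ ε₂) (hδ₁ : 0 ≤ δ₁) (hδ₂ : 0 ≤ δ₂)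
    (h₁ : IsDP adj M₁ ε₁ δ₁) (h₂ : ∀ ω₁ : Ω₁, IsDP adj (fun D => M₂ ω₁ D) ε₂ δ₂) :
    IsDP adj
      (fun D => (M₁ D).bind fun ω₁ => (M₂ ω₁ D).map fun ω₂ => (ω₁, ω₂))
      (ε₁ + ε₂) (δ₁ + δ₂) := by
  intro D D' hadj E
  simp only [PMF.toOuterMeasure_bind_apply, PMF.toOuterMeasure_map_apply]
  set e₁ : ℝ≥0∞ := ENNReal.ofReal (Real.exp ε₁) with he₁
  set e₂ : ℝ≥0∞ := ENNReal.ofReal (Real.exp ε₂) with he₂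
  set q : Dset → Ω₁ → ℝ≥0∞ :=
    fun Dd ω₁ => (M₂ ω₁ Dd).toOuterMeasure ((fun ω₂ => (ω₁, ω₂)) ⁻¹' E) with hq
  set g : Ω₁ → ℝ≥0∞ := fun ω₁ => min (q D ω₁) (e₂ * q D' ω₁) with hgdef
  have hq1 : ∀ Dd ω₁, q Dd ω₁ ≤ 1 := fun Dd ω₁ => pmf_toOuterMeasure_le_one _ _
  have hg1 : ∀ ω₁, g ω₁ ≤ 1 := fun ω₁ => le_trans (min_le_left _ _) (hq1 D ω₁)
  have hqg : ∀ ω₁, q D ω₁ ≤ g ω₁ + ENNReal.ofReal δ₂ := by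
    intro ω₁
    show q D ω₁ ≤ min (q D ω₁) (e₂ * q D' ω₁) + ENNReal.ofReal δ₂
    rw [← min_add_add_right]
    exact le_min (le_add_right le_rfl) (h₂ ω₁ hadj _)
  calc ∑' ω₁, M₁ D ω₁ * q D ω₁
      ≤ ∑' ω₁, M₁ D ω₁ * (g ω₁ + ENNReal.ofReal δ₂) := by
        exact ENNReal.tsum_le_tsum fun ω₁ => mul_le_mul_right (hqg ω₁) _
    _ = (∑' ω₁, M₁ D ω₁ * g ω₁) + ENNReal.ofReal δ₂ := by
        simp only [mul_add]
        rw [ENNReal.tsum_add, ENNReal.tsum_mul_right, (M₁ D).tsum_coe, one_mul]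
    _ ≤ (e₁ * (∑' ω₁, M₁ D' ω₁ * g ω₁) + ENNReal.ofReal δ₁) + ENNReal.ofReal δ₂ := by
        refine add_le_add_left ?_ _
        exact key_lemma (M₁ D) (M₁ D') e₁ (ENNReal.ofReal δ₁) ENNReal.ofReal_ne_top
          (h₁ hadj) g hg1
    _ ≤ (e₁ * (e₂ * ∑' ω₁, M₁ D' ω₁ * q D' ω₁) + ENNReal.ofReal δ₁)
        + ENNReal.ofReal δ₂ := by
        refine add_le_add_left (add_le_add_left (mul_le_mul_right ?_ _) _) _
        calc (∑' ω₁, M₁ D' ω₁ * g ω₁)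
            ≤ ∑' ω₁, M₁ D' ω₁ * (e₂ * q D' ω₁) :=
              ENNReal.tsum_le_tsum fun ω₁ => mul_le_mul_right (min_le_right _ _) _
          _ = e₂ * ∑' ω₁, M₁ D' ω₁ * q D' ω₁ := by
              rw [← ENNReal.tsum_mul_left]
              exact tsum_congr fun ω₁ => by ring
    _ = ENNReal.ofReal (Real.exp (ε₁ + ε₂)) * (∑' ω₁, M₁ D' ω₁ * q D' ω₁)
        + ENNReal.ofReal (δ₁ + δ₂) := by
        rw [← mul_assoc, he₁, he₂, ← ENNReal.ofReal_mul (Real.exp_nonneg _),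
          ← Real.exp_add, ENNReal.ofReal_add hδ₁ hδ₂, add_assoc]
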